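/- arXiv:2202.04984 — 2 statements merged into one kernel-verified Lean document; each statement's English description precedes it below -/
import Mathlib

section
/- Let A be a finitely generated commutative ℂ-algebra which is an integral domain. Let M be an A-module for which there exists a ℂ-subalgebra B ⊆ A isomorphic to a polynomial ring ℂ[X₁,…,X_d] over ℂ, such that A is a finitely generated B-module and M, via restriction of scalars, is a finitely generated free B-module. Let m ∈ M, and suppose there is a set S of maximal ideals of A whose corresponding set of points is Zariski-dense in the prime spectrum Spec(A), such that m ∈ 𝔪·M for every 𝔪 ∈ S (i.e., the image of m in the fiber M ⊗_A A/𝔪 vanishes for every 𝔪 ∈ S). Then m = 0. -/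
/-- In a module that is free over a domain, scalars act without torsion. -/
private lemma free_no_torsion {B : Type*} [CommRing B] [IsDomain B]
    {M : Type*} [AddCommGroup M] [Module B M] [Module.Free B M]
    (b : B) (x : M) (hb : b ≠ 0) (hbx : b • x = 0) : x = 0 := by
  let bas := Module.Free.chooseBasis B M
  have h : b • bas.repr x = 0 := by rw [← map_smul, hbx, map_zero]
  have h0 : bas.repr x = 0 := by
    ext i
    have := DFunLike.congr_fun h i
    simp only [Finsupp.smul_apply, smul_eq_mul, Finsupp.zero_apply] at this ⊢
    rcases mul_eq_zero.mp this with h' | h'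
    · exact absurd h' hb
    · exact h'
  simpa using congrArg bas.repr.symm h0

/-- A module over a domain `A` that is torsion-free over a subring `B` over which `A`
is integral is torsion-free over `A`. -/
private lemma integral_no_torsion {B A : Type*} [CommRing B] [Nontrivial B] [CommRing A] [IsDomain A]
    [Algebra B A] [Algebra.IsIntegral B A]
    {M : Type*} [AddCommGroup M] [Module A M] [Module B M] [IsScalarTower B A M]
    (hB : ∀ (b : B) (x : M), b ≠ 0 → b • x = 0 → x = 0)
    (a : A) (x : M) (ha : a ≠ 0) (hax : a • x = 0) : x = 0 := by
  have key : ∀ (n : ℕ) (p : Polynomial B), p ≠ 0 → p.natDegree ≤ n →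
      Polynomial.aeval a p = 0 → x = 0 := by
    intro n
    induction n with
    | zero =>
      intro p hp0 hdeg heval
      by_cases hc : p.coeff 0 = 0
      · exfalso
        apply hp0
        rw [Polynomial.eq_C_of_natDegree_eq_zero (Nat.le_zero.mp hdeg), hc, map_zero]
      · -- p = X * p.divX + C (p.coeff 0)
        have hsplit := Polynomial.X_mul_divX_add (p := p)
        have h0 : a * Polynomial.aeval a p.divX + algebraMap B A (p.coeff 0) = 0 := by
          have h' := congrArg (Polynomial.aeval a) hsplit
          simp only [map_add, map_mul, Polynomial.aeval_X, Polynomial.aeval_C] at h'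
          rw [heval] at h'
          exact h'
        have : (p.coeff 0) • x = 0 := by
          rw [← algebraMap_smul A (p.coeff 0) x]
          have : algebraMap B A (p.coeff 0) = -(a * Polynomial.aeval a p.divX) := by
            linear_combination h0
          rw [this, neg_smul, mul_comm, mul_smul, hax, smul_zero, neg_zero]
        exact hB _ _ hc this
    | succ n ih =>
      intro p hp0 hdeg heval
      by_cases hc : p.coeff 0 = 0
      · have hsplit : p = Polynomial.X * p.divX := by
          conv_lhs => rw [← Polynomial.X_mul_divX_add (p := p)]
          rw [hc, map_zero, add_zero]
        have hdvx0 : p.divX ≠ 0 := by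
          intro h; apply hp0; rw [hsplit, h, mul_zero]
        have heval' : Polynomial.aeval a p.divX = 0 := by
          have hz : a * Polynomial.aeval a p.divX = 0 := by
            have h' := congrArg (Polynomial.aeval a) hsplit
            simp only [map_mul, Polynomial.aeval_X] at h'
            rw [heval] at h'
            exact h'.symm
          rcases mul_eq_zero.mp hz with h' | h'
          · exact absurd h' ha
          · exact h'
        exact ih p.divX hdvx0
          (le_trans Polynomial.natDegree_divX_eq_natDegree_tsub_one.le
            (by omega)) heval'
      · have hsplit := Polynomial.X_mul_divX_add (p := p)
        have h0 : a * Polynomial.aeval a p.divX + algebraMap B A (p.coeff 0) = 0 := by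
          have h' := congrArg (Polynomial.aeval a) hsplit
          simp only [map_add, map_mul, Polynomial.aeval_X, Polynomial.aeval_C] at h'
          rw [heval] at h'
          exact h'
        have : (p.coeff 0) • x = 0 := by
          rw [← algebraMap_smul A (p.coeff 0) x]
          have : algebraMap B A (p.coeff 0) = -(a * Polynomial.aeval a p.divX) := by
            linear_combination h0
          rw [this, neg_smul, mul_comm, mul_smul, hax, smul_zero, neg_zero]
        exact hB _ _ hc this
  obtain ⟨p, hmonic, hp⟩ := Algebra.IsIntegral.isIntegral (R := B) a
  exact key p.natDegree p hmonic.ne_zero le_rfl hp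

/-- **Corollary 5.5**: Let `A` be a finitely generated commutative `ℂ`-algebra which is a
domain, and let `M` be an `A`-module that is Cohen–Macaulay of full dimension in the sense of
[BBG97, Criterion 2.5]: there is a `ℂ`-subalgebra `B ⊆ A` isomorphic to a polynomial ring
`ℂ[X₁,…,X_d]` such that `A` is a finitely generated `B`-module and `M` is a finitely generated
free `B`-module. If an element `m : M` vanishes in the fiber `M ⊗_A A/𝔪` for every maximal
ideal `𝔪` in a set `S` whose corresponding set of points is Zariski-dense in `Spec A`,
then `m = 0`. -/
theorem element_of_CM_module_vanishing_on_dense_set_is_zero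
    (A : Type*) [CommRing A] [IsDomain A] [Algebra ℂ A]
    (hfg : Algebra.FiniteType ℂ A)
    (M : Type*) [AddCommGroup M] [Module A M]
    (B : Subalgebra ℂ A) (d : ℕ) (e : B ≃ₐ[ℂ] MvPolynomial (Fin d) ℂ)
    (hAfin : Module.Finite B A) (hMfin : Module.Finite B M) (hMfree : Module.Free B M)
    (m : M) (S : Set (Ideal A)) (hS : ∀ 𝔪 ∈ S, 𝔪.IsMaximal)
    (hdense : Dense {p : PrimeSpectrum A | p.asIdeal ∈ S})
    (hvanish : ∀ 𝔪 ∈ S, m ∈ 𝔪 • (⊤ : Submodule A M)) :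
    m = 0 := by
  by_contra hm
  have hMfinA : Module.Finite A M := Module.Finite.of_restrictScalars_finite B A M
  have hint : Algebra.IsIntegral B A := Algebra.IsIntegral.of_finite B A
  -- M is torsion-free over A
  have htf : ∀ a : A, a ≠ 0 → a • m = 0 → m = 0 :=
    fun a ha hax => integral_no_torsion (B := B) (fun b x hb hbx => free_no_torsion b x hb hbx)
      a m ha hax
  -- pass to the fraction field
  set K := FractionRing A with hK
  set MK := LocalizedModule (nonZeroDivisors A) M with hMK
  set ι : M →ₗ[A] MK := LocalizedModule.mkLinearMap (nonZeroDivisors A) M with hι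
  have hx : ι m ≠ 0 := by
    intro h
    rw [hι, LocalizedModule.mkLinearMap_apply,
      show (0 : MK) = LocalizedModule.mk 0 1 from (LocalizedModule.zero_mk 1).symm,
      LocalizedModule.mk_eq] at h
    obtain ⟨u, hu⟩ := h
    simp only [one_smul, smul_zero] at hu
    exact hm (htf u (nonZeroDivisors.ne_zero u.2) hu)
  obtain ⟨φ, hφ⟩ : ∃ φ : Module.Dual K MK, φ (ι m) ≠ 0 := by
    by_contra h
    push_neg at h
    exact hx ((Module.forall_dual_apply_eq_zero_iff K (ι m)).mp h)
  let χ : M →ₗ[A] K := (φ.restrictScalars A).comp ι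
  have hχm : χ m ≠ 0 := hφ
  -- finite generators of M over A
  obtain ⟨n, g, hg⟩ := Module.Finite.exists_fin (R := A) (M := M)
  -- clear denominators
  obtain ⟨dd, hdd⟩ := IsLocalization.exist_integer_multiples_of_finite
    (nonZeroDivisors A) (fun o : Option (Fin n) => o.elim (χ m) (fun j => χ (g j)))
  obtain ⟨c₀, hc₀⟩ := hdd none
  choose b hb using fun j : Fin n => hdd (some j)
  have hddne : (dd : A) ≠ 0 := nonZeroDivisors.ne_zero dd.2
  have hc₀K : algebraMap A K c₀ = (dd : A) • χ m := hc₀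
  have hc₀ne : c₀ ≠ 0 := by
    intro h
    rw [h, map_zero] at hc₀K
    have : (algebraMap A K (dd : A)) * χ m = 0 := by
      rw [← Algebra.smul_def]; exact hc₀K.symm
    rcases mul_eq_zero.mp this with h' | h'
    · exact hddne ((map_eq_zero_iff _ (IsFractionRing.injective A K)).mp h')
    · exact hχm h'
  -- find a point of S in the basic open set of c₀
  have hne : (PrimeSpectrum.basicOpen c₀ : Set (PrimeSpectrum A)).Nonempty := by
    rw [Set.nonempty_iff_ne_empty]
    intro h
    have : PrimeSpectrum.basicOpen c₀ = ⊥ := TopologicalSpace.Opens.coe_eq_empty.mp h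
    exact hc₀ne (((PrimeSpectrum.basicOpen_eq_bot_iff c₀).mp this).eq_zero)
  obtain ⟨p, hpS, hpb⟩ : ∃ p : PrimeSpectrum A, p.asIdeal ∈ S ∧ c₀ ∉ p.asIdeal := by
    obtain ⟨p, hpo, hps⟩ := hdense.exists_mem_open (PrimeSpectrum.basicOpen c₀).isOpen hne
    exact ⟨p, hpo, (PrimeSpectrum.mem_basicOpen c₀ p).mp hps⟩
  set 𝔪 := p.asIdeal
  have hv : m ∈ 𝔪 • (⊤ : Submodule A M) := hvanish 𝔪 hpS
  -- push through χ and multiply by dd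
  have h1 : χ m ∈ 𝔪 • Submodule.span A (Set.range fun j => χ (g j)) := by
    have := Submodule.mem_map_of_mem (f := χ) hv
    rw [Submodule.map_smul''] at this
    have htop : (⊤ : Submodule A M).map χ = Submodule.span A (Set.range fun j => χ (g j)) := by
      rw [← hg, Submodule.map_span, ← Set.range_comp]
      rfl
    rwa [htop] at this
  have h2 : (dd : A) • χ m ∈ 𝔪 • Submodule.span A (Set.range fun j => (dd : A) • χ (g j)) := by
    let μ : K →ₗ[A] K := (dd : A) • LinearMap.id
    have := Submodule.mem_map_of_mem (f := μ) h1
    rw [Submodule.map_smul'', Submodule.map_span, ← Set.range_comp] at this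
    exact this
  have h3 : (dd : A) • χ m ∈ 𝔪 • Submodule.span A
      (Set.range fun j => algebraMap A K (b j)) := by
    have hfun : (fun j => (dd : A) • χ (g j)) = (fun j => algebraMap A K (b j)) :=
      funext fun j => (hb j).symm
    rwa [hfun] at h2
  have h4 : (dd : A) • χ m ∈ (𝔪 • Submodule.span A (Set.range b)).map
      (Algebra.linearMap A K) := by
    rw [Submodule.map_smul'', Submodule.map_span, ← Set.range_comp]
    exact h3
  obtain ⟨y, hy, hyeq⟩ := h4
  have hy𝔪 : y ∈ 𝔪 := by
    have : 𝔪 • Submodule.span A (Set.range b) ≤ 𝔪 • (⊤ : Submodule A A) :=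
      smul_mono_right _ le_top
    have h5 : 𝔪 • (⊤ : Submodule A A) = 𝔪 := by
      rw [Ideal.smul_eq_mul, Ideal.mul_top]
    exact h5 ▸ this hy
  have : c₀ = y := IsFractionRing.injective A K (by rw [hc₀K, ← hyeq]; rfl)
  exact hpb (this ▸ hy𝔪)
end

section
/- Let L be a group and U ≤ L a subgroup which is locally finite, i.e., every finite subset of U is contained in a finite subgroup of U. Let ψ : U → ℂˣ be a group homomorphism (a character of U). For a module M over the group algebra ℂ[L] (the monoid algebra of L over ℂ), define the (U,ψ)-coinvariants M_{U,ψ} as the quotient of M by the ℂ-linear span of the set { u•m − ψ(u)·m : u ∈ U, m ∈ M }. Then the functor M ↦ M_{U,ψ} from ℂ[L]-modules to ℂ-vector spaces is exact; in particular, for every injective ℂ[L]-linear map f : N → M, the induced ℂ-linear map N_{U,ψ} → M_{U,ψ} is injective. -/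
open MonoidAlgebra

/-- For a module `M` over the group algebra `ℂ[L]`, the `(U,ψ)`-coinvariants submodule:
the `ℂ`-linear span of the elements `u • m - ψ(u) • m` for `u ∈ U`, `m ∈ M`.  The
`(U,ψ)`-coinvariants `M_{U,ψ}` is the quotient of `M` by this submodule. -/
def coinvariantsKer {L : Type*} [Group L] (U : Subgroup L) (ψ : U →* ℂˣ)
    (M : Type*) [AddCommGroup M] [Module (MonoidAlgebra ℂ L) M]
    [Module ℂ M] [IsScalarTower ℂ (MonoidAlgebra ℂ L) M] : Submodule ℂ M :=
  Submodule.span ℂ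
    {x : M | ∃ (u : U) (m : M), x = MonoidAlgebra.of ℂ L (u : L) • m - (ψ u : ℂ) • m}

/-- Auxiliary: the `ℂ`-scalar action commutes with the `ℂ[L]`-action on any compatible
module. -/
private lemma aux_smul_comm {L : Type*} [Group L] {P : Type*} [AddCommGroup P]
    [Module (MonoidAlgebra ℂ L) P] [Module ℂ P] [IsScalarTower ℂ (MonoidAlgebra ℂ L) P]
    (a : MonoidAlgebra ℂ L) (c : ℂ) (m : P) : a • (c • m) = c • (a • m) := by
  have h1 : c • m = (c • (1 : MonoidAlgebra ℂ L)) • m := by rw [smul_assoc, one_smul]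
  rw [h1, ← mul_smul, mul_smul_comm, mul_one, smul_assoc]

/-- **Proposition 4.1** (discrete setting): Let `L` be a group and `U ≤ L` a locally finite
subgroup (every finite subset of `U` is contained in a finite subgroup of `U`), and let
`ψ : U → ℂˣ` be a character.  Then the `(U,ψ)`-coinvariants functor `M ↦ M_{U,ψ}` is exact;
in particular, for every injective `ℂ[L]`-linear map `f : N → M` the induced `ℂ`-linear map
`N_{U,ψ} → M_{U,ψ}` is injective, i.e. any `n : N` with `f n` in the coinvariants kernel of
`M` already lies in the coinvariants kernel of `N`.  (Equivalently, `ind_U^L(ψ)` is a flat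
`ℂ[L]`-module.) -/
theorem coinvariants_functor_exact
    {L : Type*} [Group L] (U : Subgroup L)
    (hU : ∀ s : Finset L, ↑s ⊆ (U : Set L) →
      ∃ V : Subgroup L, V ≤ U ∧ (V : Set L).Finite ∧ ↑s ⊆ (V : Set L))
    (ψ : U →* ℂˣ)
    (M N : Type*) [AddCommGroup M] [Module (MonoidAlgebra ℂ L) M]
    [AddCommGroup N] [Module (MonoidAlgebra ℂ L) N]
    [Module ℂ M] [IsScalarTower ℂ (MonoidAlgebra ℂ L) M]
    [Module ℂ N] [IsScalarTower ℂ (MonoidAlgebra ℂ L) N]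
    (f : N →ₗ[MonoidAlgebra ℂ L] M) (hf : Function.Injective f) :
    ∀ n : N, f n ∈ coinvariantsKer U ψ M → n ∈ coinvariantsKer U ψ N := by
  classical
  intro n hn
  rw [coinvariantsKer, Submodule.mem_span_set'] at hn
  obtain ⟨k, c, g, hg⟩ := hn
  choose u m hum using fun i => (g i).2
  -- the finite set of group elements appearing
  set s : Finset L := Finset.image (fun i => ((u i : L))) Finset.univ with hs_def
  have hsU : ↑s ⊆ (U : Set L) := by
    intro x hx
    simp only [hs_def, Finset.coe_image, Set.mem_image] at hx
    obtain ⟨i, _, rfl⟩ := hx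
    exact (u i).2
  obtain ⟨V, hVU, hVfin, hsV⟩ := hU s hsU
  haveI : Finite V := hVfin.to_subtype
  haveI : Fintype V := Fintype.ofFinite V
  set χ : V →* ℂˣ := ψ.comp (Subgroup.inclusion hVU) with hχ_def
  have hcard : (Fintype.card V : ℂ) ≠ 0 := by
    exact_mod_cast Nat.cast_ne_zero.mpr Fintype.card_ne_zero
  -- the averaging idempotent
  set e : MonoidAlgebra ℂ L :=
      (Fintype.card V : ℂ)⁻¹ • ∑ v : V, (((χ v)⁻¹ : ℂˣ) : ℂ) • MonoidAlgebra.of ℂ L (v : L)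
    with he_def
  -- key multiplicative property of `e`
  have hA : ∀ v : V, e * MonoidAlgebra.of ℂ L (v : L) = ((χ v : ℂˣ) : ℂ) • e := by
    intro w
    rw [he_def, smul_mul_assoc, Finset.sum_mul, smul_smul, mul_comm ((χ w : ℂˣ) : ℂ),
      ← smul_smul]
    congr 1
    rw [Finset.smul_sum]
    refine Fintype.sum_equiv (Equiv.mulRight w) _ _ ?_
    intro v
    simp only [Equiv.coe_mulRight, smul_mul_assoc]
    have h1 : MonoidAlgebra.of ℂ L (v : L) * MonoidAlgebra.of ℂ L (w : L)
        = MonoidAlgebra.of ℂ L ((v * w : V) : L) := by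
      rw [← map_mul]; rfl
    rw [h1, smul_smul]
    congr 1
    have : (χ (v * w))⁻¹ = (χ v)⁻¹ * (χ w)⁻¹ := by
      rw [map_mul, mul_inv, mul_comm]
    rw [this, Units.val_mul, mul_comm ((χ w : ℂˣ) : ℂ), mul_assoc, Units.inv_mul, mul_one]
  -- `e` kills all generators with `u ∈ V`
  have hB : ∀ (v : V) (m' : M),
      e • (MonoidAlgebra.of ℂ L (v : L) • m' - ((χ v : ℂˣ) : ℂ) • m') = 0 := by
    intro v m'
    rw [smul_sub, ← mul_smul, hA, smul_assoc, aux_smul_comm, sub_self]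
  -- hence `e • f n = 0`
  have hfn : e • f n = 0 := by
    rw [← hg, Finset.smul_sum]
    apply Finset.sum_eq_zero
    intro i _
    rw [aux_smul_comm]
    have hvmem : ((u i : L)) ∈ V :=
      hsV (by simp [hs_def])
    have hχeq : ((χ ⟨(u i : L), hvmem⟩ : ℂˣ) : ℂ) = ((ψ (u i) : ℂˣ) : ℂ) := rfl
    rw [hum i, ← hχeq, hB ⟨(u i : L), hvmem⟩ (m i), smul_zero]
  -- by injectivity, `e • n = 0`
  have hen : e • n = 0 := by
    apply hf
    rw [map_smul, hfn, map_zero]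
  -- hence the averaged sum vanishes
  have hsum0 : (∑ v : V, (((χ v)⁻¹ : ℂˣ) : ℂ) • (MonoidAlgebra.of ℂ L (v : L) • n)) = 0 := by
    have h1 : e • n = (Fintype.card V : ℂ)⁻¹ •
        ∑ v : V, (((χ v)⁻¹ : ℂˣ) : ℂ) • (MonoidAlgebra.of ℂ L (v : L) • n) := by
      rw [he_def, smul_assoc, Finset.sum_smul]
      congr 1
      refine Finset.sum_congr rfl fun v _ => ?_
      rw [smul_assoc]
    rw [h1] at hen
    rcases smul_eq_zero.mp hen with h | h
    · exact absurd h (inv_ne_zero hcard)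
    · exact h
  -- express `n` as a combination of generators
  have key : n = (Fintype.card V : ℂ)⁻¹ • ∑ v : V, (-(((χ v)⁻¹ : ℂˣ) : ℂ)) •
      (MonoidAlgebra.of ℂ L (v : L) • n - ((χ v : ℂˣ) : ℂ) • n) := by
    have hterm : ∀ v : V, (-(((χ v)⁻¹ : ℂˣ) : ℂ)) •
        (MonoidAlgebra.of ℂ L (v : L) • n - ((χ v : ℂˣ) : ℂ) • n)
        = n - (((χ v)⁻¹ : ℂˣ) : ℂ) • (MonoidAlgebra.of ℂ L (v : L) • n) := by
      intro v
      rw [smul_sub, neg_smul, neg_smul, smul_smul, sub_neg_eq_add]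
      have : (((χ v)⁻¹ : ℂˣ) : ℂ) * ((χ v : ℂˣ) : ℂ) = 1 := by
        rw [← Units.val_mul, inv_mul_cancel, Units.val_one]
      rw [this, one_smul, neg_add_eq_sub]
    rw [Finset.sum_congr rfl fun v _ => hterm v, Finset.sum_sub_distrib, hsum0, sub_zero,
      Finset.sum_const, Finset.card_univ]
    rw [← Nat.cast_smul_eq_nsmul ℂ, smul_smul, inv_mul_cancel₀ hcard, one_smul]
  -- conclude span membership
  rw [coinvariantsKer, key]
  apply Submodule.smul_mem
  apply Submodule.sum_mem
  intro v _
  apply Submodule.smul_mem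
  apply Submodule.subset_span
  exact ⟨Subgroup.inclusion hVU v, n, rfl⟩
end
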